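/- Let P be the disjoint union of finitely many well-ordered chains (pairwise incomparable). Then P is sub-representable. -/

import Mathlib

set_option linter.unusedSectionVars false
open Ordinal

open Ordinal

section SortLemma
variable {n : ℕ} {α : Type*} [LinearOrder α]

lemma exists_perm_iff_sort_le (f g : Fin n → α) :
    (∃ σ : Equiv.Perm (Fin n), ∀ k, f k ≤ g (σ k)) ↔
    ∀ k, (f ∘ Tuple.sort f) k ≤ (g ∘ Tuple.sort g) k := by
  constructor
  · rintro ⟨σ, hσ⟩ k
    by_contra hk
    push_neg at hk
    set f' := f ∘ Tuple.sort f with hf'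
    set g' := g ∘ Tuple.sort g with hg'
    classical
    set s : Finset (Fin n) := Finset.univ.filter (fun j => f' k ≤ g j) with hs
    set t : Finset (Fin n) := Finset.univ.filter (fun j => f' k ≤ g' j) with ht
    have hcard1 : (Finset.Ici k).card ≤ s.card := by
      apply Finset.card_le_card_of_injOn (fun j => σ (Tuple.sort f j))
      · intro j hj
        simp only [hs, Finset.coe_filter, Finset.mem_filter, Finset.mem_univ, true_and,
          Set.mem_setOf_eq]
        calc f' k ≤ f' j := Tuple.monotone_sort f (Finset.mem_Ici.1 hj)
        _ = f (Tuple.sort f j) := rfl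
        _ ≤ g (σ (Tuple.sort f j)) := hσ _
      · intro a _ b _ h
        exact (Tuple.sort f).injective (σ.injective h)
    have hcard2 : s.card = t.card := by
      apply Finset.card_nbij' (fun j => (Tuple.sort g)⁻¹ j) (fun j => Tuple.sort g j) <;>
        simp [hs, ht, hg', Set.MapsTo, Set.LeftInvOn, Set.RightInvOn]
    have hsub : t ⊆ Finset.Ioi k := by
      intro j hj
      simp only [ht, Finset.mem_filter, Finset.mem_univ, true_and] at hj
      rw [Finset.mem_Ioi]
      by_contra hjk
      push_neg at hjk
      exact absurd hj (not_le.2 ((Tuple.monotone_sort g hjk).trans_lt hk))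
    have : (Finset.Ici k).card ≤ (Finset.Ioi k).card :=
      hcard1.trans (hcard2.le.trans (Finset.card_le_card hsub))
    have hlt : (Finset.Ioi k).card < (Finset.Ici k).card := by
      apply Finset.card_lt_card
      constructor
      · intro x hx
        exact Finset.mem_Ici.2 (Finset.mem_Ioi.1 hx).le
      · intro hsub2
        exact absurd (Finset.mem_Ioi.1 (hsub2 (Finset.mem_Ici.2 le_rfl))) (lt_irrefl k)
    omega
  · intro h
    refine ⟨(Tuple.sort f).symm.trans (Tuple.sort g), fun j => ?_⟩
    have := h ((Tuple.sort f).symm j)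
    simpa using this

lemma exists_perm_extend (s : Finset (Fin n)) (m : Fin n → Fin n)
    (hm : Set.InjOn m ↑s) : ∃ σ : Equiv.Perm (Fin n), ∀ i ∈ s, σ i = m i := by
  classical
  set t := s.image m with hts
  have hcard : sᶜ.card = tᶜ.card := by
    rw [Finset.card_compl, Finset.card_compl, Finset.card_image_of_injOn hm]
  let e : ↥(sᶜ) ≃ ↥(tᶜ) := Finset.equivOfCardEq hcard
  let φ : Fin n → Fin n := fun i => if h : i ∈ s then m i else (e ⟨i, by simpa using h⟩ : Fin n)
  have hinj : Function.Injective φ := by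
    intro i j hij
    by_cases hi : i ∈ s <;> by_cases hj : j ∈ s <;> simp only [φ, hi, hj, dif_pos, dif_neg,
      not_false_iff] at hij
    · exact hm hi hj hij
    · exfalso
      have h1 : m i ∈ t := Finset.mem_image_of_mem m hi
      have h2 : (e ⟨j, by simpa using hj⟩ : Fin n) ∈ tᶜ := (e _).2
      rw [← hij] at h2
      exact (Finset.mem_compl.1 h2) h1
    · exfalso
      have h1 : m j ∈ t := Finset.mem_image_of_mem m hj
      have h2 : (e ⟨i, by simpa using hi⟩ : Fin n) ∈ tᶜ := (e _).2
      rw [hij] at h2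
      exact (Finset.mem_compl.1 h2) h1
    · have := e.injective (Subtype.ext hij)
      simpa using congrArg Subtype.val this
  refine ⟨Equiv.ofBijective φ (Finite.injective_iff_bijective.1 hinj), fun i hi => ?_⟩
  simp [Equiv.ofBijective, φ, dif_pos hi]

end SortLemma


universe u

section OType
variable {α : Type u} [LinearOrder α] [WellFoundedLT α]

noncomputable def otype (A : Set α) : Ordinal := Ordinal.type ((· < ·) : A → A → Prop)

lemma otype_le_type (A : Set α) :
    otype A ≤ Ordinal.type ((· < ·) : α → α → Prop) :=
  (Subrel.relEmbedding ((· < ·) : α → α → Prop) (· ∈ A)).ordinal_type_le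

lemma otype_empty_of_not_nonempty {A : Set α} (h : ¬ A.Nonempty) : otype A = 0 := by
  rw [otype, Ordinal.type_eq_zero_iff_isEmpty]
  rw [Set.not_nonempty_iff_eq_empty] at h
  subst h
  infer_instance

lemma nonempty_orderEmbedding_iff_otype_le {α₂ : Type u} [LinearOrder α₂] [WellFoundedLT α₂]
    (A : Set α) (B : Set α₂) :
    Nonempty (↥A ↪o ↥B) ↔ otype A ≤ otype B := by
  rw [otype, otype, Ordinal.type_le_iff']
  constructor
  · rintro ⟨f⟩
    exact ⟨f.ltEmbedding⟩
  · rintro ⟨f⟩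
    exact ⟨OrderEmbedding.ofStrictMono f (fun a b h => f.map_rel_iff.2 h)⟩

noncomputable def iseg (o : Ordinal) : Set α :=
  {b | typein ((· < ·) : α → α → Prop) b < o}

lemma iseg_subset_iseg_of_le {o₁ o₂ : Ordinal} (h : o₁ ≤ o₂) :
    (iseg o₁ : Set α) ⊆ iseg o₂ := fun b hb =>
  show typein ((· < ·) : α → α → Prop) b < o₂ from lt_of_lt_of_le hb h

lemma le_of_iseg_subset_iseg {o₁ o₂ : Ordinal}
    (h1 : o₁ ≤ Ordinal.type ((· < ·) : α → α → Prop))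
    (h : (iseg o₁ : Set α) ⊆ iseg o₂) : o₁ ≤ o₂ := by
  by_contra hlt
  push_neg at hlt
  obtain ⟨b, hb⟩ := typein_surj ((· < ·) : α → α → Prop) (lt_of_lt_of_le hlt h1)
  have : b ∈ (iseg o₁ : Set α) := by rw [iseg, Set.mem_setOf_eq, hb]; exact hlt
  have := h this
  rw [iseg, Set.mem_setOf_eq, hb] at this
  exact lt_irrefl _ this

lemma otype_univ : otype (Set.univ : Set α) = Ordinal.type ((· < ·) : α → α → Prop) := by
  apply le_antisymm (otype_le_type _)
  rw [otype, Ordinal.type_le_iff']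
  refine ⟨RelEmbedding.mk ⟨fun a => ⟨a, Set.mem_univ a⟩, fun a b h => by
    simpa using congrArg Subtype.val h⟩ ?_⟩
  intro a b
  exact Iff.rfl

lemma otype_iseg {o : Ordinal} (h : o ≤ Ordinal.type ((· < ·) : α → α → Prop)) :
    otype (iseg o : Set α) = o := by
  rcases lt_or_eq_of_le h with h' | h'
  · obtain ⟨a, ha⟩ := typein_surj ((· < ·) : α → α → Prop) h'
    have hset : (iseg o : Set α) = {b | b < a} := by
      ext b
      rw [iseg, Set.mem_setOf_eq, Set.mem_setOf_eq, ← ha]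
      exact typein_lt_typein _
    rw [hset, ← ha]
    exact Ordinal.type_subrel ((· < ·) : α → α → Prop) a
  · have hset : (iseg o : Set α) = Set.univ := by
      ext b
      simp only [iseg, Set.mem_setOf_eq, Set.mem_univ, iff_true, h']
      exact typein_lt_type _ b
    rw [hset, otype_univ, h']

end OType

section SigmaComp
variable {n : ℕ} {β : Fin n → Type*} [∀ i, LinearOrder (β i)] [∀ i, WellFoundedLT (β i)]

def scomp (i : Fin n) (S : Set (Σ i, β i)) : Set (β i) := {b | Sigma.mk i b ∈ S}

lemma mem_scomp_cast {T : Set (Σ i, β i)} {x : Σ i, β i} {j : Fin n}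
    (hx : x ∈ T) (h : x.1 = j) : (h ▸ x.2 : β j) ∈ scomp j T := by
  subst h; exact hx

lemma sigma_le_iff_cast {x y : Σ i, β i} {i : Fin n} (hx : x.1 = i) (hy : y.1 = i) :
    x ≤ y ↔ (hx ▸ x.2 : β i) ≤ (hy ▸ y.2) := by
  subst hx
  obtain ⟨xa, xb⟩ := x
  obtain ⟨ya, yb⟩ := y
  cases hy
  simpa using Sigma.mk_le_mk_iff

lemma fst_eq_of_sigma_le {x y : Σ i, β i} (h : x ≤ y) : x.1 = y.1 := by
  obtain ⟨h1, -⟩ := Sigma.le_def.1 h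
  exact h1

lemma comparable_of_fst_eq {x y : Σ i, β i} (h : x.1 = y.1) : x ≤ y ∨ y ≤ x := by
  obtain ⟨xa, xb⟩ := x
  obtain ⟨ya, yb⟩ := y
  cases h
  rcases le_total xb yb with h | h
  · exact Or.inl (Sigma.mk_le_mk_iff.2 h)
  · exact Or.inr (Sigma.mk_le_mk_iff.2 h)

lemma exists_matching_of_emb {S T : Set (Σ i, β i)} (e : ↥S ↪o ↥T) :
    ∃ σ : Equiv.Perm (Fin n), ∀ i, otype (scomp i S) ≤ otype (scomp (σ i) T) := by
  classical
  have hfst : ∀ (i : Fin n) (a b : β i) (ha : a ∈ scomp i S) (hb : b ∈ scomp i S),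
      (e ⟨⟨i, a⟩, ha⟩ : ↥T).1.1 = (e ⟨⟨i, b⟩, hb⟩ : ↥T).1.1 := by
    intro i a b ha hb
    rcases le_total a b with h | h
    · exact fst_eq_of_sigma_le (Subtype.coe_le_coe.2
        (e.monotone (Subtype.mk_le_mk.2 (Sigma.mk_le_mk_iff.2 h))))
    · exact (fst_eq_of_sigma_le (Subtype.coe_le_coe.2
        (e.monotone (Subtype.mk_le_mk.2 (Sigma.mk_le_mk_iff.2 h))))).symm
  set m : Fin n → Fin n := fun i =>
    if h : (scomp i S).Nonempty then (e ⟨⟨i, h.choose⟩, h.choose_spec⟩ : ↥T).1.1 else i with hm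
  have hmspec : ∀ (i : Fin n) (a : β i) (ha : a ∈ scomp i S),
      (e ⟨⟨i, a⟩, ha⟩ : ↥T).1.1 = m i := by
    intro i a ha
    have hne : (scomp i S).Nonempty := ⟨a, ha⟩
    rw [hm]
    simp only [dif_pos hne]
    exact hfst i a hne.choose ha hne.choose_spec
  have hcomp : ∀ i : Fin n, (scomp i S).Nonempty →
      otype (scomp i S) ≤ otype (scomp (m i) T) := by
    intro i hne
    refine (nonempty_orderEmbedding_iff_otype_le _ _).1 ⟨OrderEmbedding.ofMapLEIff
      (fun b => ⟨(hmspec i b.1 b.2) ▸ (e ⟨⟨i, b.1⟩, b.2⟩ : ↥T).1.2,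
        mem_scomp_cast (e ⟨⟨i, b.1⟩, b.2⟩).2 _⟩) ?_⟩
    intro b b'
    rw [Subtype.mk_le_mk, ← sigma_le_iff_cast (hmspec i b.1 b.2) (hmspec i b'.1 b'.2),
      Subtype.coe_le_coe, e.le_iff_le]
    exact Iff.trans Subtype.mk_le_mk (Sigma.mk_le_mk_iff.trans Subtype.coe_le_coe)
  set s : Finset (Fin n) := Finset.univ.filter (fun i => (scomp i S).Nonempty) with hs
  have hinj : Set.InjOn m ↑s := by
    intro i hi j hj hij
    simp only [hs, Finset.coe_filter, Finset.mem_univ, true_and, Set.mem_setOf_eq] at hi hj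
    obtain ⟨a, ha⟩ := hi
    obtain ⟨b, hb⟩ := hj
    have hfst2 : (e ⟨⟨i, a⟩, ha⟩ : ↥T).1.1 = (e ⟨⟨j, b⟩, hb⟩ : ↥T).1.1 := by
      rw [hmspec i a ha, hmspec j b hb, hij]
    rcases comparable_of_fst_eq hfst2 with h | h
    · exact fst_eq_of_sigma_le (Subtype.mk_le_mk.1 (e.le_iff_le.1 (Subtype.coe_le_coe.1 h)))
    · exact (fst_eq_of_sigma_le (Subtype.mk_le_mk.1 (e.le_iff_le.1 (Subtype.coe_le_coe.1 h)))).symm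
  obtain ⟨σ, hσ⟩ := exists_perm_extend s m hinj
  refine ⟨σ, fun i => ?_⟩
  by_cases hne : (scomp i S).Nonempty
  · rw [hσ i (by simp [hs, hne])]
    exact hcomp i hne
  · rw [otype_empty_of_not_nonempty hne]
    exact zero_le

lemma emb_of_matching {S T : Set (Σ i, β i)} (σ : Equiv.Perm (Fin n))
    (h : ∀ i, otype (scomp i S) ≤ otype (scomp (σ i) T)) : Nonempty (↥S ↪o ↥T) := by
  have he : ∀ i, Nonempty (↥(scomp i S) ↪o ↥(scomp (σ i) T)) :=
    fun i => (nonempty_orderEmbedding_iff_otype_le _ _).2 (h i)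
  have e : ∀ i, ↥(scomp i S) ↪o ↥(scomp (σ i) T) := fun i => (he i).some
  refine ⟨OrderEmbedding.ofMapLEIff
    (fun x => ⟨⟨σ x.1.1, (e x.1.1 ⟨x.1.2, x.2⟩ : ↥(scomp (σ x.1.1) T)).1⟩,
      (e x.1.1 ⟨x.1.2, x.2⟩).2⟩) ?_⟩
  rintro ⟨⟨i, a⟩, hx⟩ ⟨⟨j, b⟩, hy⟩
  show (⟨σ i, _⟩ : Σ i, β i) ≤ ⟨σ j, _⟩ ↔ (⟨i, a⟩ : Σ i, β i) ≤ ⟨j, b⟩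
  by_cases hij : i = j
  · subst hij
    rw [Sigma.mk_le_mk_iff, Sigma.mk_le_mk_iff]
    exact (e i).le_iff_le
  · constructor
    · intro hle
      exact absurd (σ.injective (fst_eq_of_sigma_le hle)) hij
    · intro hle
      exact absurd (fst_eq_of_sigma_le hle) hij

end SigmaComp
section Main
variable {n : ℕ} {β : Fin n → Type u} [∀ i, LinearOrder (β i)] [∀ i, WellFoundedLT (β i)]

noncomputable def gam (β : Fin n → Type u) [∀ i, LinearOrder (β i)] [∀ i, WellFoundedLT (β i)] :
    Fin n → Ordinal := fun i => Ordinal.type ((· < ·) : β i → β i → Prop)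

noncomputable def otf (S : Set (Σ i, β i)) : Fin n → Ordinal := fun i => otype (scomp i S)

noncomputable def osf (S : Set (Σ i, β i)) : Fin n → Ordinal :=
  fun k => otf S (Tuple.sort (otf S) k)

noncomputable def gmap (S : Set (Σ i, β i)) : Set (Σ i, β i) :=
  {x | typein ((· < ·) : β x.1 → β x.1 → Prop) x.2 < osf S ((Tuple.sort (gam β)).symm x.1)}

lemma scomp_gmap (i : Fin n) (S : Set (Σ i, β i)) :
    scomp i (gmap S) = iseg (osf S ((Tuple.sort (gam β)).symm i)) := rfl

lemma osf_le (S : Set (Σ i, β i)) (k : Fin n) : osf S k ≤ gam β (Tuple.sort (gam β) k) :=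
  (exists_perm_iff_sort_le (otf S) (gam β)).1 ⟨1, fun j => otype_le_type _⟩ k

lemma emb_iff_osf (S T : Set (Σ i, β i)) :
    Nonempty (↥S ↪o ↥T) ↔ ∀ k, osf S k ≤ osf T k := by
  have h := exists_perm_iff_sort_le (otf S) (otf T)
  constructor
  · rintro ⟨e⟩ k
    exact h.1 (exists_matching_of_emb e) k
  · intro hk
    obtain ⟨σ, hσ⟩ := h.2 (fun k => hk k)
    exact emb_of_matching σ hσ

lemma gmap_subset_iff (S T : Set (Σ i, β i)) :
    gmap S ⊆ gmap T ↔ ∀ k, osf S k ≤ osf T k := by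
  constructor
  · intro h k
    have incl : scomp (Tuple.sort (gam β) k) (gmap S) ⊆ scomp (Tuple.sort (gam β) k) (gmap T) :=
      fun b hb => h hb
    rw [scomp_gmap, scomp_gmap, Equiv.symm_apply_apply] at incl
    exact le_of_iseg_subset_iseg (osf_le S k) incl
  · intro h x hx
    have hx' : typein ((· < ·) : β x.1 → β x.1 → Prop) x.2 <
        osf S ((Tuple.sort (gam β)).symm x.1) := hx
    show typein ((· < ·) : β x.1 → β x.1 → Prop) x.2 < osf T ((Tuple.sort (gam β)).symm x.1)
    exact lt_of_lt_of_le hx' (h _)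

lemma otf_gmap (S : Set (Σ i, β i)) (k : Fin n) :
    otf (gmap S) (Tuple.sort (gam β) k) = osf S k := by
  show otype (scomp _ (gmap S)) = _
  rw [scomp_gmap, Equiv.symm_apply_apply]
  exact otype_iseg (osf_le S k)

lemma gmap_biembed (S : Set (Σ i, β i)) :
    Nonempty (↥S ↪o ↥(gmap S)) ∧ Nonempty (↥(gmap S) ↪o ↥S) := by
  constructor
  · refine emb_of_matching ((Tuple.sort (otf S)).symm.trans (Tuple.sort (gam β))) (fun i => ?_)
    have h1 := otf_gmap S ((Tuple.sort (otf S)).symm i)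
    have h2 : osf S ((Tuple.sort (otf S)).symm i) = otf S i := by
      show otf S (Tuple.sort (otf S) ((Tuple.sort (otf S)).symm i)) = otf S i
      rw [Equiv.apply_symm_apply]
    show otf S i ≤ otf (gmap S) (Tuple.sort (gam β) ((Tuple.sort (otf S)).symm i))
    rw [h1, h2]
  · refine emb_of_matching ((Tuple.sort (gam β)).symm.trans (Tuple.sort (otf S))) (fun i => ?_)
    have h1 := otf_gmap S ((Tuple.sort (gam β)).symm i)
    rw [Equiv.apply_symm_apply] at h1
    show otf (gmap S) i ≤ otf S (Tuple.sort (otf S) ((Tuple.sort (gam β)).symm i))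
    rw [h1]
    exact le_of_eq rfl

end Main

def SubRepresentable (α : Type*) [PartialOrder α] : Prop :=
  ∃ g : Set α → Set α,
    (∀ P₁ P₂ : Set α, Nonempty (↥P₁ ↪o ↥P₂) ↔ g P₁ ⊆ g P₂) ∧
    ∀ P₁ : Set α, Nonempty (↥P₁ ↪o ↥(g P₁)) ∧ Nonempty (↥(g P₁) ↪o ↥P₁)

open Sigma

theorem disjoint_union_of_wellOrdered_subrep (n : ℕ) (β : Fin n → Type*)
    [∀ i, LinearOrder (β i)]
    (hwo : ∀ i, ∀ S : Set (β i), S.Nonempty → ∃ m ∈ S, ∀ s ∈ S, m ≤ s) :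
    SubRepresentable (Σ i, β i) := by
  haveI : ∀ i, WellFoundedLT (β i) := fun i =>
    ⟨WellFounded.wellFounded_iff_has_min.2 (fun s hs => by
      obtain ⟨m, hm, h⟩ := hwo i s hs
      exact ⟨m, hm, fun x hx => not_lt.2 (h x hx)⟩)⟩
  refine ⟨gmap, fun S T => ?_, fun S => gmap_biembed S⟩
  rw [emb_iff_osf, gmap_subset_iff]
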